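/- For the star graph K_{1,n−1} with n > 2, the unique-maximum choice number with respect to paths satisfies ch_um(H_paths(K_{1,n−1})) ≥ n − 1, while the unique-maximum chromatic number with respect to paths satisfies χ_um(H_paths(K_{1,n−1})) = 2. -/
import Mathlib


/-- The vertex sets of simple paths in the star `K_{1,n-1}` (center `none`,
leaves `some i`): singletons, center–leaf pairs, and leaf–center–leaf triples. -/
def IsStarPath (n : ℕ) (S : Finset (Option (Fin (n - 1)))) : Prop :=
  (∃ v, S = {v}) ∨ (∃ i, S = {none, some i}) ∨
    (∃ i j, i ≠ j ∧ S = {none, some i, some j})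

/-- `C` is a unique-maximum coloring of the star `K_{1,n-1}` with respect to paths. -/
def StarUM (n : ℕ) (C : Option (Fin (n - 1)) → ℕ) : Prop :=
  ∀ S : Finset (Option (Fin (n - 1))), IsStarPath n S →
    ∃ v ∈ S, ∀ u ∈ S, u ≠ v → C u < C v

/-- For the star `K_{1,n-1}` with `n > 2`: the unique-maximum choice number with
respect to paths is at least `n - 1` (there are lists of size `n - 2` admitting no
unique-maximum coloring), while the unique-maximum chromatic number with respect
to paths equals 2. -/
theorem star_um_choice_vs_chromatic (n : ℕ) (hn : 2 < n) :
    (∃ L : Option (Fin (n - 1)) → Finset ℕ,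
        (∀ v, n - 2 ≤ (L v).card) ∧ (∀ v, ∀ c ∈ L v, 0 < c) ∧
        ¬ ∃ C : Option (Fin (n - 1)) → ℕ, (∀ v, C v ∈ L v) ∧ StarUM n C) ∧
    IsLeast {k : ℕ | ∃ C : Option (Fin (n - 1)) → ℕ,
        (∀ v, C v ∈ Finset.Icc 1 k) ∧ StarUM n C} 2 := by
  constructor
  · refine ⟨fun v => match v with
      | none => Finset.Icc 1 (n - 2)
      | some _ => Finset.Icc (n - 1) (2 * n - 4), ?_, ?_, ?_⟩
    · intro v; cases v <;> simp [Nat.card_Icc] <;> omega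
    · intro v c hc; cases v <;> simp [Finset.mem_Icc] at hc <;> omega
    · rintro ⟨C, hC, hUM⟩
      have hcard : (Finset.Icc (n - 1) (2 * n - 4)).card <
          (Finset.univ : Finset (Fin (n - 1))).card := by
        simp [Nat.card_Icc]; omega
      obtain ⟨i, -, j, -, hij, hEq⟩ :=
        Finset.exists_ne_map_eq_of_card_lt_of_maps_to hcard
          (fun a _ => (hC (some a) : _))
      obtain ⟨v, hv, hmax⟩ := hUM {none, some i, some j} (Or.inr (Or.inr ⟨i, j, hij, rfl⟩))
      have hci := hC (some i); have hcj := hC (some j); have hc0 := hC none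
      simp only [Finset.mem_Icc] at hci hcj hc0
      simp only [Finset.mem_insert, Finset.mem_singleton] at hv
      rcases hv with rfl | rfl | rfl
      · have := hmax (some i) (by simp) (by simp); omega
      · have := hmax (some j) (by simp) (by simp [hij.symm]); omega
      · have := hmax (some i) (by simp) (by simp [hij]); omega
  · constructor
    · refine ⟨fun v => match v with | none => 2 | some _ => 1, ?_, ?_⟩
      · intro v; cases v <;> simp
      · intro S hS
        rcases hS with ⟨v, rfl⟩ | ⟨i, rfl⟩ | ⟨i, j, hij, rfl⟩
        · exact ⟨v, by simp, by intro u hu hne; simp at hu; exact absurd hu hne⟩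
        · refine ⟨none, by simp, ?_⟩
          intro u hu hne
          simp only [Finset.mem_insert, Finset.mem_singleton] at hu
          rcases hu with rfl | rfl
          · exact absurd rfl hne
          · simp
        · refine ⟨none, by simp, ?_⟩
          intro u hu hne
          simp only [Finset.mem_insert, Finset.mem_singleton] at hu
          rcases hu with rfl | rfl | rfl
          · exact absurd rfl hne
          · simp
          · simp
    · rintro k ⟨C, hC, hUM⟩
      by_contra h
      push_neg at h
      set i : Fin (n - 1) := ⟨0, by omega⟩
      set j : Fin (n - 1) := ⟨1, by omega⟩
      have hij : i ≠ j := by simp [i, j, Fin.ext_iff]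
      obtain ⟨v, hv, hmax⟩ := hUM {none, some i, some j} (Or.inr (Or.inr ⟨i, j, hij, rfl⟩))
      have hci := hC (some i); have hcj := hC (some j); have hc0 := hC none
      simp only [Finset.mem_Icc] at hci hcj hc0
      simp only [Finset.mem_insert, Finset.mem_singleton] at hv
      rcases hv with rfl | rfl | rfl
      · have := hmax (some i) (by simp) (by simp); omega
      · have := hmax none (by simp) (by simp); omega
      · have := hmax none (by simp) (by simp); omega
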